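/- Let x₁,…,xₙ be positive real numbers and B = [b_{ij}], C = [c_{ij}] two n×n doubly stochastic matrices. Then (x₁x₂⋯xₙ)^{1/n} ≤ (∏_{i=1}^n I(∑_{j=1}^n b_{ij}xⱼ, ∑_{j=1}^n c_{ij}xⱼ))^{1/n} ≤ (x₁+x₂+⋯+xₙ)/n, where I is the identric mean. -/

import Mathlib

open Finset

/-- The identric mean: `I(a,b) = a` if `a = b`, and
`I(a,b) = (1/e)(b^b/a^a)^{1/(b-a)}` otherwise. -/
noncomputable def identric (a b : ℝ) : ℝ :=
  if a = b then a else (Real.exp 1)⁻¹ * (b ^ b / a ^ a) ^ (b - a)⁻¹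

lemma identric_pos {a b : ℝ} (ha : 0 < a) (hb : 0 < b) : 0 < identric a b := by
  rw [identric]
  split
  · exact ha
  · have : (0:ℝ) < b ^ b / a ^ a := div_pos (Real.rpow_pos_of_pos hb b) (Real.rpow_pos_of_pos ha a)
    positivity

lemma identric_comm {a b : ℝ} (ha : 0 < a) (hb : 0 < b) : identric a b = identric b a := by
  rcases eq_or_ne a b with h | h
  · rw [h]
  · have hbb : (0:ℝ) < b ^ b := Real.rpow_pos_of_pos hb b
    have haa : (0:ℝ) < a ^ a := Real.rpow_pos_of_pos ha a
    rw [identric, identric, if_neg h, if_neg (Ne.symm h)]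
    congr 1
    have h1 : a ^ a / b ^ b = (b ^ b / a ^ a)⁻¹ := by rw [inv_div]
    rw [h1, Real.inv_rpow (by positivity), ← Real.rpow_neg (by positivity), neg_inv, neg_sub]

lemma log_identric {a b : ℝ} (ha : 0 < a) (hb : 0 < b) (hab : a < b) :
    Real.log (identric a b) = (∫ t in a..b, Real.log t) / (b - a) := by
  have hba : b - a ≠ 0 := sub_ne_zero.2 hab.ne'
  have hbb : (0:ℝ) < b ^ b := Real.rpow_pos_of_pos hb b
  have haa : (0:ℝ) < a ^ a := Real.rpow_pos_of_pos ha a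
  rw [identric, if_neg hab.ne, integral_log,
    Real.log_mul (by positivity) (by positivity),
    Real.log_rpow (div_pos hbb haa), Real.log_div hbb.ne' haa.ne',
    Real.log_rpow hb, Real.log_rpow ha, Real.log_inv, Real.log_exp]
  field_simp
  ring

lemma integral_linear (a b c d : ℝ) :
    ∫ t in a..b, (c + d * t) = c * (b - a) + d * ((b ^ 2 - a ^ 2) / 2) := by
  rw [intervalIntegral.integral_add intervalIntegrable_const
    (intervalIntegral.intervalIntegrable_id.const_mul d),
    intervalIntegral.integral_const, intervalIntegral.integral_const_mul, integral_id,
    smul_eq_mul]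
  ring

lemma log_intervalIntegrable {a b : ℝ} (ha : 0 < a) (hb : 0 < b) :
    IntervalIntegrable Real.log MeasureTheory.volume a b := by
  apply ContinuousOn.intervalIntegrable
  apply Real.continuousOn_log.mono
  intro t ht
  have h1 : 0 < t := lt_of_lt_of_le (lt_min ha hb) ht.1
  simpa using h1.ne'

lemma chord_integral_le {a b : ℝ} (ha : 0 < a) (hab : a < b) :
    (b - a) * ((Real.log a + Real.log b) / 2) ≤ ∫ t in a..b, Real.log t := by
  have hb : 0 < b := ha.trans hab
  have hba : (0:ℝ) < b - a := sub_pos.2 hab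
  set c := (b * Real.log a - a * Real.log b) / (b - a) with hc
  set d := (Real.log b - Real.log a) / (b - a) with hd
  have key : ∀ t ∈ Set.Icc a b, c + d * t ≤ Real.log t := by
    intro t ht
    have hp : 0 ≤ (b - t)/(b-a) := div_nonneg (by linarith [ht.2]) hba.le
    have hq : 0 ≤ (t - a)/(b-a) := div_nonneg (by linarith [ht.1]) hba.le
    have hpq : (b - t)/(b-a) + (t - a)/(b-a) = 1 := by field_simp; ring
    have h2 := (strictConcaveOn_log_Ioi.concaveOn).2 (Set.mem_Ioi.2 ha) (Set.mem_Ioi.2 hb)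
      hp hq hpq
    have ht' : ((b - t)/(b-a)) • a + ((t - a)/(b-a)) • b = t := by
      simp only [smul_eq_mul]; field_simp; ring
    rw [ht'] at h2
    refine le_trans (le_of_eq ?_) h2
    simp only [smul_eq_mul, hc, hd]
    field_simp
    ring
  calc (b-a) * ((Real.log a + Real.log b)/2) = ∫ t in a..b, (c + d*t) := by
        rw [integral_linear, hc, hd]; field_simp; ring
    _ ≤ ∫ t in a..b, Real.log t := by
        refine intervalIntegral.integral_mono_on hab.le ?_ (log_intervalIntegrable ha hb) key
        exact intervalIntegrable_const.add (intervalIntegral.intervalIntegrable_id.const_mul d)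

lemma integral_le_log_mid {a b : ℝ} (ha : 0 < a) (hab : a < b) :
    (∫ t in a..b, Real.log t) ≤ (b - a) * Real.log ((a + b) / 2) := by
  have hb : 0 < b := ha.trans hab
  have hm : 0 < (a + b) / 2 := by positivity
  set m := (a + b) / 2 with hmdef
  have key : ∀ t ∈ Set.Icc a b, Real.log t ≤ (Real.log m - 1) + m⁻¹ * t := by
    intro t ht
    have htpos : 0 < t := lt_of_lt_of_le ha ht.1
    have h1 : Real.log (t / m) ≤ t / m - 1 := Real.log_le_sub_one_of_pos (by positivity)
    rw [Real.log_div htpos.ne' hm.ne'] at h1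
    have : t / m = m⁻¹ * t := by ring
    linarith [this ▸ h1]
  calc (∫ t in a..b, Real.log t) ≤ ∫ t in a..b, ((Real.log m - 1) + m⁻¹ * t) :=
        intervalIntegral.integral_mono_on hab.le (log_intervalIntegrable ha hb)
          (intervalIntegrable_const.add (intervalIntegral.intervalIntegrable_id.const_mul m⁻¹))
          key
    _ = (b - a) * Real.log m := by
        rw [integral_linear]
        have : b ^ 2 - a ^ 2 = (b - a) * (a + b) := by ring
        rw [this, hmdef]
        field_simp
        ring

lemma identric_bounds' {a b : ℝ} (ha : 0 < a) (hab : a < b) :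
    Real.sqrt (a * b) ≤ identric a b ∧ identric a b ≤ (a + b) / 2 := by
  have hb : 0 < b := ha.trans hab
  have hba : (0:ℝ) < b - a := sub_pos.2 hab
  have hI : 0 < identric a b := identric_pos ha hb
  have hlog := log_identric ha hb hab
  constructor
  · rw [← Real.log_le_log_iff (Real.sqrt_pos.2 (by positivity)) hI,
      Real.log_sqrt (by positivity), Real.log_mul ha.ne' hb.ne', hlog,
      le_div_iff₀ hba]
    calc (Real.log a + Real.log b) / 2 * (b - a)
        = (b - a) * ((Real.log a + Real.log b) / 2) := by ring
      _ ≤ _ := chord_integral_le ha hab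
  · rw [← Real.log_le_log_iff hI (by positivity), hlog, div_le_iff₀ hba]
    calc (∫ t in a..b, Real.log t) ≤ (b - a) * Real.log ((a + b) / 2) :=
        integral_le_log_mid ha hab
      _ = Real.log ((a + b) / 2) * (b - a) := by ring

lemma identric_bounds {a b : ℝ} (ha : 0 < a) (hb : 0 < b) :
    Real.sqrt (a * b) ≤ identric a b ∧ identric a b ≤ (a + b) / 2 := by
  rcases lt_trichotomy a b with h | h | h
  · exact identric_bounds' ha h
  · subst h
    rw [identric, if_pos rfl, Real.sqrt_mul_self ha.le]
    constructor <;> linarith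
  · have := identric_bounds' hb h
    rw [identric_comm ha hb, mul_comm, add_comm]
    exact this

lemma prod_le_row {n : ℕ} (x : Fin n → ℝ) (hx : ∀ j, 0 < x j) (b : Fin n → Fin n → ℝ)
    (hb0 : ∀ i j, 0 ≤ b i j) (hbrow : ∀ i, ∑ j, b i j = 1) (hbcol : ∀ j, ∑ i, b i j = 1) :
    ∏ j, x j ≤ ∏ i, ∑ j, b i j * x j := by
  calc ∏ j, x j = ∏ j, (x j) ^ (∑ i, b i j) := by
        refine Finset.prod_congr rfl fun j _ => ?_
        rw [hbcol, Real.rpow_one]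
    _ = ∏ j, ∏ i, (x j) ^ (b i j) := by
        refine Finset.prod_congr rfl fun j _ => ?_
        rw [← Real.rpow_sum_of_pos (hx j)]
    _ = ∏ i, ∏ j, (x j) ^ (b i j) := Finset.prod_comm
    _ ≤ ∏ i, ∑ j, b i j * x j :=
        Finset.prod_le_prod
          (fun i _ => Finset.prod_nonneg fun j _ => Real.rpow_nonneg (hx j).le _)
          (fun i _ => Real.geom_mean_le_arith_mean_weighted _ _ _ (fun j _ => hb0 i j)
            (hbrow i) (fun j _ => (hx j).le))

lemma row_pos {n : ℕ} (x : Fin n → ℝ) (hx : ∀ j, 0 < x j) (b : Fin n → Fin n → ℝ)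
    (hb0 : ∀ i j, 0 ≤ b i j) (hbrow : ∀ i, ∑ j, b i j = 1) (i : Fin n) :
    0 < ∑ j, b i j * x j := by
  calc (0:ℝ) < ∏ j, (x j) ^ (b i j) :=
        Finset.prod_pos fun j _ => Real.rpow_pos_of_pos (hx j) _
    _ ≤ ∑ j, b i j * x j :=
        Real.geom_mean_le_arith_mean_weighted _ _ _ (fun j _ => hb0 i j) (hbrow i)
          (fun j _ => (hx j).le)

lemma row_sum {n : ℕ} (x : Fin n → ℝ) (b : Fin n → Fin n → ℝ)
    (hbcol : ∀ j, ∑ i, b i j = 1) :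
    ∑ i, ∑ j, b i j * x j = ∑ j, x j := by
  rw [Finset.sum_comm]
  refine Finset.sum_congr rfl fun j _ => ?_
  rw [← Finset.sum_mul, hbcol, one_mul]

/-- Refinement of the AM–GM inequality via two doubly stochastic matrices and the
identric mean. -/
theorem agm_refinement_identric_doubly_stochastic
    {n : ℕ} (hn : 0 < n)
    (x : Fin n → ℝ) (hx : ∀ j, 0 < x j)
    (b c : Fin n → Fin n → ℝ)
    (hb0 : ∀ i j, 0 ≤ b i j) (hbrow : ∀ i, ∑ j, b i j = 1) (hbcol : ∀ j, ∑ i, b i j = 1)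
    (hc0 : ∀ i j, 0 ≤ c i j) (hcrow : ∀ i, ∑ j, c i j = 1) (hccol : ∀ j, ∑ i, c i j = 1) :
    (∏ j, x j) ^ ((n : ℝ)⁻¹) ≤
        (∏ i, identric (∑ j, b i j * x j) (∑ j, c i j * x j)) ^ ((n : ℝ)⁻¹) ∧
      (∏ i, identric (∑ j, b i j * x j) (∑ j, c i j * x j)) ^ ((n : ℝ)⁻¹) ≤
        (∑ j, x j) / n := by
  have hA : ∀ i, 0 < ∑ j, b i j * x j := row_pos x hx b hb0 hbrow
  have hC : ∀ i, 0 < ∑ j, c i j * x j := row_pos x hx c hc0 hcrow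
  have hI : ∀ i, 0 < identric (∑ j, b i j * x j) (∑ j, c i j * x j) :=
    fun i => identric_pos (hA i) (hC i)
  have hIprod : 0 < ∏ i, identric (∑ j, b i j * x j) (∑ j, c i j * x j) :=
    Finset.prod_pos fun i _ => hI i
  have hxprod : 0 < ∏ j, x j := Finset.prod_pos fun j _ => hx j
  constructor
  · -- left inequality
    refine Real.rpow_le_rpow hxprod.le ?_ (by positivity)
    have hsq : (∏ j, x j) ^ 2 ≤
        (∏ i, identric (∑ j, b i j * x j) (∑ j, c i j * x j)) ^ 2 := by
      calc (∏ j, x j) ^ 2 = (∏ j, x j) * (∏ j, x j) := sq _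
        _ ≤ (∏ i, ∑ j, b i j * x j) * (∏ i, ∑ j, c i j * x j) :=
            mul_le_mul (prod_le_row x hx b hb0 hbrow hbcol)
              (prod_le_row x hx c hc0 hcrow hccol) hxprod.le
              (Finset.prod_nonneg fun i _ => (hA i).le)
        _ = ∏ i, ((∑ j, b i j * x j) * (∑ j, c i j * x j)) := (Finset.prod_mul_distrib).symm
        _ = ∏ i, (Real.sqrt ((∑ j, b i j * x j) * (∑ j, c i j * x j))) ^ 2 := by
            refine Finset.prod_congr rfl fun i _ => ?_
            rw [Real.sq_sqrt (mul_nonneg (hA i).le (hC i).le)]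
        _ = (∏ i, Real.sqrt ((∑ j, b i j * x j) * (∑ j, c i j * x j))) ^ 2 :=
            Finset.prod_pow _ _ _
        _ ≤ (∏ i, identric (∑ j, b i j * x j) (∑ j, c i j * x j)) ^ 2 := by
            refine pow_le_pow_left₀ (Finset.prod_nonneg fun i _ => Real.sqrt_nonneg _) ?_ 2
            exact Finset.prod_le_prod (fun i _ => Real.sqrt_nonneg _)
              (fun i _ => (identric_bounds (hA i) (hC i)).1)
    exact (pow_le_pow_iff_left₀ hxprod.le hIprod.le two_ne_zero).1 hsq
  · -- right inequality
    have hcard : ∑ _i : Fin n, (n:ℝ)⁻¹ = 1 := by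
      simp [Finset.card_univ]
      exact mul_inv_cancel₀ (Nat.cast_ne_zero.2 hn.ne')
    calc (∏ i, identric (∑ j, b i j * x j) (∑ j, c i j * x j)) ^ ((n : ℝ)⁻¹)
        = ∏ i, (identric (∑ j, b i j * x j) (∑ j, c i j * x j)) ^ ((n : ℝ)⁻¹) :=
          (Real.finset_prod_rpow _ _ (fun i _ => (hI i).le) _).symm
      _ ≤ ∑ i, (n:ℝ)⁻¹ * identric (∑ j, b i j * x j) (∑ j, c i j * x j) :=
          Real.geom_mean_le_arith_mean_weighted _ _ _ (fun i _ => by positivity) hcard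
            (fun i _ => (hI i).le)
      _ ≤ ∑ i, (n:ℝ)⁻¹ * (((∑ j, b i j * x j) + (∑ j, c i j * x j)) / 2) :=
          Finset.sum_le_sum fun i _ => by
            have := (identric_bounds (hA i) (hC i)).2
            have hn' : (0:ℝ) ≤ (n:ℝ)⁻¹ := by positivity
            exact mul_le_mul_of_nonneg_left this hn'
      _ = (∑ j, x j) / n := by
          rw [← Finset.mul_sum]
          rw [show (∑ i, (((∑ j, b i j * x j) + (∑ j, c i j * x j)) / 2)) =
            ((∑ i, ∑ j, b i j * x j) + (∑ i, ∑ j, c i j * x j)) / 2 by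
              rw [← Finset.sum_add_distrib, Finset.sum_div]]
          rw [row_sum x b hbcol, row_sum x c hccol]
          field_simp
          ring
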